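/- Let (W,S) be a Coxeter system with length function ℓ, and let y, w ∈ W. Then the following are equivalent: (i) there exists a reduced expression w = σ₁σ₂⋯σ_ℓ (σᵢ ∈ S) admitting a subword σ_{i₁}σ_{i₂}⋯σ_{i_k} (with i₁ < i₂ < ⋯ < i_k) that is a reduced expression for y; (ii) every reduced expression of w admits such a subword that is a reduced expression for y. -/

import Mathlib

namespace BruhatSubwordAux

attribute [local instance] Classical.propDecidable

noncomputable section

open List

variable {B : Type*} {W : Type*} [Group W] {M : CoxeterMatrix B} (cs : CoxeterSystem M W)

local prefix:100 "s" => cs.simple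
local prefix:100 "π" => cs.wordProd
local prefix:100 "ℓ" => cs.length
local prefix:100 "ris" => cs.rightInvSeq

/-- The function underlying the reflection permutation representation. -/
def permAux (i : B) : W × ZMod 2 → W × ZMod 2 :=
  fun p => (s i * p.1 * s i, p.2 + if p.1 = s i then 1 else 0)

lemma permAux_involutive (i : B) : Function.Involutive (permAux cs i) := by
  rintro ⟨t, ε⟩
  simp only [permAux, Prod.mk.injEq]
  refine ⟨?_, ?_⟩
  · simp [mul_assoc, cs.simple_mul_simple_cancel_left, cs.simple_mul_simple_cancel_right]
  · have h : (s i * t * s i = s i) ↔ (t = s i) := by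
      constructor
      · intro h
        have := congrArg (fun x => s i * x * s i) h
        simpa [mul_assoc, cs.simple_mul_simple_cancel_left,
          cs.simple_mul_simple_cancel_right] using this
      · rintro rfl; simp [cs.simple_mul_simple_cancel_right]
    rcases eq_or_ne t (s i) with h' | h'
    · subst h'
      have h2 : s i * s i * s i = s i := by simp [cs.simple_mul_simple_cancel_right]
      rw [if_pos rfl]
      simp only [h2, ↓reduceIte]
      rw [add_assoc]
      have h3 : (1 + 1 : ZMod 2) = 0 := rfl
      rw [h3, add_zero]
    · simp [h', h.not.mpr h']

/-- The permutation of `W × ZMod 2` associated to a simple reflection. -/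
def permS (i : B) : Equiv.Perm (W × ZMod 2) := (permAux_involutive cs i).toPerm

lemma permS_apply (i : B) (t : W) (ε : ZMod 2) :
    permS cs i (t, ε) = (s i * t * s i, ε + if t = s i then 1 else 0) := rfl

/-- The permutation associated to a word. -/
def permWord (ω : List B) : Equiv.Perm (W × ZMod 2) := (ω.map (permS cs)).prod

@[simp] lemma permWord_nil : permWord cs [] = 1 := rfl

lemma permWord_cons (i : B) (ω : List B) :
    permWord cs (i :: ω) = permS cs i * permWord cs ω := by
  simp [permWord]

lemma permWord_apply (ω : List B) (t : W) (ε : ZMod 2) :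
    permWord cs ω (t, ε) = (π ω * t * (π ω)⁻¹, ε + ((ris ω).count t : ZMod 2)) := by
  induction ω generalizing ε with
  | nil => simp [CoxeterSystem.rightInvSeq]
  | cons i ω ih =>
      rw [permWord_cons]
      have hris : ris (i :: ω) = ((π ω)⁻¹ * (s i) * (π ω)) :: ris ω := rfl
      have hcond : (π ω * t * (π ω)⁻¹ = s i) ↔ (t = (π ω)⁻¹ * s i * π ω) := by
        constructor
        · intro h
          have := congrArg (fun x => (π ω)⁻¹ * x * (π ω)) h
          simpa [mul_assoc] using this
        · rintro rfl; group
      rw [Equiv.Perm.mul_apply, ih, permS_apply, hris, count_cons]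
      simp only [beq_iff_eq, Prod.mk.injEq]
      refine ⟨?_, ?_⟩
      · simp only [cs.wordProd_cons, mul_inv_rev, cs.inv_simple]
        group
      · rcases eq_or_ne t ((π ω)⁻¹ * s i * π ω) with h' | h'
        · rw [if_pos (hcond.mpr h'), if_pos h'.symm]
          push_cast
          ring
        · rw [if_neg (hcond.not.mpr h'), if_neg (fun hc => h' hc.symm)]
          push_cast
          ring


lemma drop_alternatingWord (i j : B) : ∀ (m d : ℕ),
    (CoxeterSystem.alternatingWord i j m).drop d = CoxeterSystem.alternatingWord i j (m - d) := by
  intro m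
  induction m with
  | zero =>
      intro d
      rw [Nat.zero_sub]
      show List.drop d ([] : List B) = ([] : List B)
      simp
  | succ m ih =>
      intro d
      cases d with
      | zero => simp
      | succ d =>
          rw [CoxeterSystem.alternatingWord_succ' i j m]
          show (CoxeterSystem.alternatingWord i j m).drop d = _
          rw [ih d]
          congr 1
          omega

lemma get?_alternatingWord (i j : B) : ∀ (m k : ℕ), k < m →
    (CoxeterSystem.alternatingWord i j m)[k]?
      = some (if Even (m - k - 1) then j else i) := by
  intro m
  induction m with
  | zero => intro k h; omega
  | succ m ih =>
      intro k h
      rw [CoxeterSystem.alternatingWord_succ' i j m]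
      cases k with
      | zero =>
          rw [List.getElem?_cons_zero]
          have h2 : m + 1 - 0 - 1 = m := by omega
          rw [h2]
      | succ k =>
          have hk : k < m := by omega
          rw [List.getElem?_cons_succ, ih k hk]
          have h2 : m + 1 - (k + 1) - 1 = m - k - 1 := by omega
          rw [h2]

/-- The "inversion step" of an alternating word. -/
lemma prodAlt_inv_mul_succ (i j : B) (l : ℕ) :
    (π (CoxeterSystem.alternatingWord i j l))⁻¹ * π (CoxeterSystem.alternatingWord i j (l + 1))
      = (s j * s i) ^ l * s j := by
  have hsc : ∀ n : ℕ, s j * (s i * s j) ^ n = (s j * s i) ^ n * s j := by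
    intro n
    exact (SemiconjBy.pow_right (by simp [SemiconjBy, mul_assoc]) n)
  have hinv : ∀ n : ℕ, ((s i * s j) ^ n)⁻¹ = (s j * s i) ^ n := by
    intro n
    rw [← inv_pow, mul_inv_rev, cs.inv_simple, cs.inv_simple]
  rw [cs.prod_alternatingWord_eq_mul_pow, cs.prod_alternatingWord_eq_mul_pow]
  rcases Nat.even_or_odd l with he | ho
  · obtain ⟨a, rfl⟩ := he
    have h1 : ¬ Even (a + a + 1) := by simp [Nat.even_add_one, Nat.even_add]
    have h2 : (a + a) / 2 = a := by omega
    have h3 : (a + a + 1) / 2 = a := by omega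
    have he' : Even (a + a) := ⟨a, rfl⟩
    rw [if_pos he', if_neg h1, h2, h3, one_mul, hinv, hsc,
      ← mul_assoc, ← pow_add]
  · obtain ⟨a, rfl⟩ := ho
    have h1 : ¬ Even (2 * a + 1) := by simp [Nat.even_add_one]
    have h2 : Even (2 * a + 1 + 1) := by refine ⟨a + 1, by omega⟩
    have h3 : (2 * a + 1) / 2 = a := by omega
    have h4 : (2 * a + 1 + 1) / 2 = a + 1 := by omega
    rw [if_neg h1, if_pos h2, h3, h4, one_mul, mul_inv_rev, hinv, cs.inv_simple,
      mul_assoc, hsc, ← mul_assoc, ← pow_add]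
    congr 2
    omega

lemma getD_ris_alternatingWord (i j : B) (m k : ℕ) (h : k < m) :
    (ris (CoxeterSystem.alternatingWord i j m)).getD k 1 = (s j * s i) ^ (m - k - 1) * s j := by
  rw [cs.getD_rightInvSeq, drop_alternatingWord, get?_alternatingWord i j m k h]
  have h1 : m - (k + 1) = m - k - 1 := by omega
  rw [h1]
  have h2 : s (if Even (m - k - 1) then j else i) * π (CoxeterSystem.alternatingWord i j (m - k - 1))
      = π (CoxeterSystem.alternatingWord i j (m - k - 1 + 1)) := by
    rw [CoxeterSystem.alternatingWord_succ' i j (m - k - 1), cs.wordProd_cons]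
  calc (π (CoxeterSystem.alternatingWord i j (m - k - 1)))⁻¹
        * (Option.map cs.simple (some (if Even (m - k - 1) then j else i))).getD 1
        * π (CoxeterSystem.alternatingWord i j (m - k - 1))
      = (π (CoxeterSystem.alternatingWord i j (m - k - 1)))⁻¹
        * π (CoxeterSystem.alternatingWord i j (m - k - 1 + 1)) := by
        rw [Option.map_some, Option.getD_some, mul_assoc, h2]
    _ = (s j * s i) ^ (m - k - 1) * s j := prodAlt_inv_mul_succ cs i j (m - k - 1)

lemma ris_alternatingWord_double (i j : B) (m : ℕ) (hm : (s j * s i) ^ m = 1) :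
    ris (CoxeterSystem.alternatingWord i j (2 * m))
      = ris (CoxeterSystem.alternatingWord i j m) ++ ris (CoxeterSystem.alternatingWord i j m) := by
  apply List.ext_getElem
  · simp; omega
  · intro k h1 h2
    rw [← List.getD_eq_getElem _ 1, ← List.getD_eq_getElem _ 1]
    have hk : k < 2 * m := by
      simpa using h1
    rw [getD_ris_alternatingWord cs i j (2 * m) k hk]
    rcases Nat.lt_or_ge k m with hkm | hkm
    · rw [List.getD_append _ _ 1 k (by simpa using hkm),
        getD_ris_alternatingWord cs i j m k hkm]
      have h3 : 2 * m - k - 1 = m + (m - k - 1) := by omega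
      rw [h3, pow_add, hm, one_mul]
    · rw [List.getD_append_right _ _ 1 k (by simpa using hkm)]
      have h4 : k - (ris (CoxeterSystem.alternatingWord i j m)).length = k - m := by
        simp
      rw [h4, getD_ris_alternatingWord cs i j m (k - m) (by omega)]
      have h5 : 2 * m - k - 1 = m - (k - m) - 1 := by omega
      rw [h5]

lemma permWord_alternating (i j : B) (m : ℕ) :
    (permS cs i * permS cs j) ^ m = permWord cs (CoxeterSystem.alternatingWord i j (2 * m)) := by
  induction m with
  | zero => simp [CoxeterSystem.alternatingWord, permWord]
  | succ m ih =>
      have h1 : 2 * (m + 1) = (2 * m + 1) + 1 := by omega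
      rw [h1, CoxeterSystem.alternatingWord_succ' i j (2 * m + 1),
        CoxeterSystem.alternatingWord_succ' i j (2 * m)]
      have h2 : ¬ Even (2 * m + 1) := by simp [Nat.even_add_one]
      have h3 : Even (2 * m) := ⟨m, by omega⟩
      rw [if_neg h2, if_pos h3, permWord_cons, permWord_cons, ← ih, pow_succ']
      rw [mul_assoc]

lemma permS_liftable : M.IsLiftable (permS cs) := by
  intro i j
  rw [permWord_alternating]
  apply Equiv.ext
  rintro ⟨t, ε⟩
  rw [permWord_apply]
  have h1 : π (CoxeterSystem.alternatingWord i j (2 * M i j)) = 1 := by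
    rw [cs.prod_alternatingWord_eq_mul_pow]
    have h2 : Even (2 * M i j) := ⟨M i j, by omega⟩
    have h3 : 2 * M i j / 2 = M i j := by omega
    rw [if_pos h2, h3, one_mul, cs.simple_mul_simple_pow]
  have h4 : ((ris (CoxeterSystem.alternatingWord i j (2 * M i j))).count t : ZMod 2) = 0 := by
    rw [ris_alternatingWord_double cs i j (M i j) (cs.simple_mul_simple_pow' i j),
      List.count_append]
    push_cast
    ring_nf
    have h5 : (2 : ZMod 2) = 0 := rfl
    rw [h5, mul_zero]
  rw [h1, h4]
  simp

noncomputable def eta : W →* Equiv.Perm (W × ZMod 2) := cs.lift ⟨permS cs, permS_liftable cs⟩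

lemma eta_wordProd (ω : List B) : eta cs (π ω) = permWord cs ω := by
  induction ω with
  | nil => simp [permWord]
  | cons i ω ih =>
      rw [cs.wordProd_cons, map_mul, ih, permWord_cons, eta, CoxeterSystem.lift_apply_simple]

lemma eta_apply (w : W) :
    ∃ f : W → ℕ, ∀ t ε, eta cs w (t, ε) = (w * t * w⁻¹, ε + (f t : ZMod 2)) := by
  obtain ⟨ω, rfl⟩ := cs.wordProd_surjective w
  exact ⟨fun t => (ris ω).count t, fun t ε => by rw [eta_wordProd, permWord_apply]⟩

lemma eta_simple_apply (i : B) (x : ZMod 2) :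
    eta cs (s i) (s i, x) = (s i, x + 1) := by
  rw [eta, CoxeterSystem.lift_apply_simple, permS_apply, if_pos rfl]
  simp [cs.simple_mul_simple_cancel_right]

lemma eta_reflection {t : W} (ht : cs.IsReflection t) (ε : ZMod 2) :
    eta cs t (t, ε) = (t, ε + 1) := by
  obtain ⟨v, i, rfl⟩ := ht
  obtain ⟨f, hf⟩ := eta_apply cs v
  obtain ⟨g, hg⟩ := eta_apply cs v⁻¹
  have h1 : eta cs v⁻¹ (v * s i * v⁻¹, ε) = (s i, ε + (g (v * s i * v⁻¹) : ZMod 2)) := by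
    rw [hg, inv_inv]
    congr 1
    group
  have h2 := eta_simple_apply cs i (ε + (g (v * s i * v⁻¹) : ZMod 2))
  have h3 := hf (s i) (ε + (g (v * s i * v⁻¹) : ZMod 2) + 1)
  have h4 := hf (s i) (ε + (g (v * s i * v⁻¹) : ZMod 2))
  have hid : eta cs v (eta cs v⁻¹ (v * s i * v⁻¹, ε)) = (v * s i * v⁻¹, ε) := by
    rw [← Equiv.Perm.mul_apply, ← map_mul, mul_inv_cancel, map_one, Equiv.Perm.one_apply]
  rw [h1, h4] at hid
  have h5 : ε + (g (v * s i * v⁻¹) : ZMod 2) + (f (s i) : ZMod 2) = ε :=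
    congrArg Prod.snd hid
  have hsplit : eta cs (v * s i * v⁻¹) (v * s i * v⁻¹, ε)
      = eta cs v (eta cs (s i) (eta cs v⁻¹ (v * s i * v⁻¹, ε))) := by
    rw [map_mul, map_mul]
    rfl
  rw [hsplit, h1, h2, h3, Prod.mk.injEq]
  exact ⟨rfl, by linear_combination h5⟩

theorem mem_rightInvSeq_of_isRightInversion (ω : List B) {t : W} (ht : cs.IsReflection t)
    (hl : ℓ (π ω * t) < ℓ (π ω)) : t ∈ ris ω := by
  obtain ⟨β, hβred, hβ⟩ := cs.exists_reduced_word' (π ω * t)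
  have h2 : π β * t = π ω := by rw [← hβ, mul_assoc, ht.mul_self, mul_one]
  have hnot : t ∉ ris β := by
    intro hmem
    have h1 := (cs.isRightInversion_of_mem_rightInvSeq hβred hmem).2
    rw [h2, ← hβ] at h1
    omega
  by_contra hmem
  have hc0 : (ris ω).count t = 0 := List.count_eq_zero.mpr hmem
  have hc0' : (ris β).count t = 0 := List.count_eq_zero.mpr hnot
  have e1 : eta cs (π ω) (t, (0 : ZMod 2)) = (π ω * t * (π ω)⁻¹, (0 : ZMod 2)) := by
    rw [eta_wordProd, permWord_apply, zero_add, hc0, Nat.cast_zero]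
  have e2 : eta cs (π ω) (t, (0 : ZMod 2)) = (π β * t * (π β)⁻¹, (1 : ZMod 2)) := by
    rw [← h2, map_mul, Equiv.Perm.mul_apply, eta_reflection cs ht, eta_wordProd,
      permWord_apply, hc0', Nat.cast_zero, add_zero, zero_add]
  rw [e1] at e2
  have h6 : (0 : ZMod 2) = 1 := congrArg Prod.snd e2
  exact absurd h6 (by decide)

theorem exists_eraseIdx_of_isRightInversion (ω : List B) {t : W} (ht : cs.IsReflection t)
    (hl : ℓ (π ω * t) < ℓ (π ω)) :
    ∃ j, j < ω.length ∧ π (ω.eraseIdx j) = π ω * t := by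
  have hmem := mem_rightInvSeq_of_isRightInversion cs ω ht hl
  rw [List.mem_iff_getElem] at hmem
  obtain ⟨j, hj, hget⟩ := hmem
  rw [cs.length_rightInvSeq] at hj
  refine ⟨j, hj, ?_⟩
  rw [← cs.wordProd_mul_getD_rightInvSeq ω j]
  congr 1
  rw [List.getD_eq_getElem _ 1 (by rw [cs.length_rightInvSeq]; exact hj)]
  exact hget

theorem extract (ω : List B) : ∃ ω', ω'.Sublist ω ∧ cs.IsReduced ω' ∧ π ω' = π ω := by
  induction ω using List.reverseRecOn with
  | nil =>
      refine ⟨[], by simp, ?_, rfl⟩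
      simp [CoxeterSystem.IsReduced]
  | append_singleton α i ih =>
      obtain ⟨α', hsub, hred, hprod⟩ := ih
      have hπ : π (α ++ [i]) = π α' * s i := by
        rw [cs.wordProd_append, cs.wordProd_singleton, hprod]
      rcases cs.length_mul_simple (π α') i with hup | hdown
      · refine ⟨α' ++ [i], hsub.append (List.Sublist.refl [i]), ?_, ?_⟩
        · show ℓ (π (α' ++ [i])) = (α' ++ [i]).length
          have hr : ℓ (π α') = α'.length := hred
          rw [cs.wordProd_append, cs.wordProd_singleton, hup, List.length_append]
          simp [hr]
        · rw [cs.wordProd_append, cs.wordProd_singleton, hπ]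
      · have hlt : ℓ (π α' * s i) < ℓ (π α') := by omega
        obtain ⟨j, hj, hej⟩ :=
          exists_eraseIdx_of_isRightInversion cs α' (cs.isReflection_simple i) hlt
        refine ⟨α'.eraseIdx j, ?_, ?_, ?_⟩
        · exact ((α'.eraseIdx_sublist j).trans hsub).trans (List.sublist_append_left α [i])
        · show ℓ (π (α'.eraseIdx j)) = (α'.eraseIdx j).length
          have hlen := List.length_eraseIdx_add_one hj
          have hr : ℓ (π α') = α'.length := hred
          rw [hej]
          omega
        · rw [hej, hπ]

/-- A Bruhat covering-type step: multiply by a reflection and increase length. -/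
def bstep : W → W → Prop := fun a b =>
  (∃ t, cs.IsReflection t ∧ b = a * t) ∧ cs.length a < cs.length b

/-- Bruhat order relation. -/
def br : W → W → Prop := Relation.ReflTransGen (bstep cs)

theorem subword_of_br : ∀ {y w : W}, br cs y w → ∀ ω, cs.IsReduced ω → π ω = w →
    ∃ ω', ω'.Sublist ω ∧ cs.IsReduced ω' ∧ π ω' = y := by
  suffices h : ∀ n w y, ℓ w = n → br cs y w → ∀ ω, cs.IsReduced ω → π ω = w →
      ∃ ω', ω'.Sublist ω ∧ cs.IsReduced ω' ∧ π ω' = y by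
    exact fun {y w} hbr ω h1 h2 => h (ℓ w) w y rfl hbr ω h1 h2
  intro n
  induction n using Nat.strong_induction_on with
  | _ n IH =>
    intro w y hn hbr ω hred hprod
    rcases Relation.ReflTransGen.cases_tail hbr with rfl | ⟨u, hyu, hstep⟩
    · exact ⟨ω, List.Sublist.refl ω, hred, hprod⟩
    · obtain ⟨⟨t, htref, rfl⟩, hlt⟩ := hstep
      have hprods : π ω * t = u := by rw [hprod, mul_assoc, htref.mul_self, mul_one]
      have h2 : ℓ (π ω * t) < ℓ (π ω) := by rw [hprods, hprod]; exact hlt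
      obtain ⟨j, hj, hej⟩ := exists_eraseIdx_of_isRightInversion cs ω htref h2
      obtain ⟨δ, hδsub, hδred, hδprod⟩ := extract cs (ω.eraseIdx j)
      have hδu : π δ = u := by rw [hδprod, hej, hprods]
      have hun : ℓ u < n := by rw [← hn]; exact hlt
      obtain ⟨ω', h1, h2', h3⟩ := IH (ℓ u) hun u y rfl hyu δ hδred hδu
      exact ⟨ω', (h1.trans hδsub).trans (ω.eraseIdx_sublist j), h2', h3⟩

lemma sublist_singleton {γ : List B} {i : B} (h : γ.Sublist [i]) : γ = [] ∨ γ = [i] := by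
  cases h with
  | cons _ h' => exact Or.inl (List.sublist_nil.mp h')
  | cons_cons _ h' => exact Or.inr (by rw [List.sublist_nil.mp h'])

lemma reduced_concat_facts {α : List B} {i : B} (h : cs.IsReduced (α ++ [i])) :
    cs.IsReduced α ∧ ℓ (π α * s i) = ℓ (π α) + 1 := by
  have h1 : ℓ (π α * s i) = α.length + 1 := by
    have h' : ℓ (π (α ++ [i])) = (α ++ [i]).length := h
    rwa [cs.wordProd_append, cs.wordProd_singleton, List.length_append,
      List.length_singleton] at h'
  have h2 : ℓ (π α) ≤ α.length := cs.length_wordProd_le α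
  rcases cs.length_mul_simple (π α) i with hu | hd
  · exact ⟨show ℓ (π α) = α.length by omega, by omega⟩
  · omega

theorem key : ∀ n : ℕ,
    (∀ ω : List B, cs.IsReduced ω → ω.length ≤ n → ∀ ω' : List B, ω'.Sublist ω →
        cs.IsReduced ω' → br cs (π ω') (π ω)) ∧
    (∀ v : W, ℓ v ≤ n → ∀ (u : W) (i : B), br cs u v → ℓ v < ℓ (v * s i) →
        ℓ u < ℓ (u * s i) → br cs (u * s i) (v * s i)) ∧
    (∀ x : W, ℓ x ≤ n → ∀ (u : W) (i : B), br cs u x → ℓ u < ℓ (u * s i) →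
        ℓ (x * s i) < ℓ x → br cs (u * s i) x) := by
  intro n
  induction n using Nat.strong_induction_on with
  | _ n IH =>
    refine ⟨?_, ?_, ?_⟩
    · -- subword implies Bruhat
      intro ω hred hlen ω' hsub hred'
      rcases ω.eq_nil_or_concat' with rfl | ⟨α, i, rfl⟩
      · rw [List.sublist_nil.mp hsub]
        exact Relation.ReflTransGen.refl
      · obtain ⟨hαred, hαup⟩ := reduced_concat_facts cs hred
        have hαlen : ℓ (π α) = α.length := hαred
        have hn : α.length + 1 ≤ n := by simpa using hlen
        obtain ⟨β, γ, rfl, hβ, hγ⟩ := List.sublist_append_iff.mp hsub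
        have hstep : bstep cs (π α) (π (α ++ [i])) := by
          refine ⟨⟨s i, cs.isReflection_simple i, ?_⟩, ?_⟩
          · rw [cs.wordProd_append, cs.wordProd_singleton]
          · rw [cs.wordProd_append, cs.wordProd_singleton]; omega
        rcases sublist_singleton hγ with rfl | rfl
        · rw [List.append_nil] at hred' ⊢
          have hbr : br cs (π β) (π α) :=
            (IH (n - 1) (by omega)).1 α hαred (by omega) β hβ hred'
          exact hbr.tail hstep
        · obtain ⟨hβred, hβup⟩ := reduced_concat_facts cs hred'
          have hbr : br cs (π β) (π α) :=
            (IH (n - 1) (by omega)).1 α hαred (by omega) β hβ hβred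
          have h2 := (IH (n - 1) (by omega)).2.1 (π α) (by omega) (π β) i hbr
            (by omega) (by omega)
          simpa [cs.wordProd_append] using h2
    · -- lifting, ascent case
      intro v hv u i hbr hvup huup
      rcases Relation.ReflTransGen.cases_tail hbr with rfl | ⟨x, hux, hstep⟩
      · exact Relation.ReflTransGen.refl
      · obtain ⟨⟨t, htref, rfl⟩, hlt⟩ := hstep
        rcases Nat.lt_or_ge (ℓ x) (ℓ (x * s i)) with hxup | hxdown
        · have h1 : br cs (u * s i) (x * s i) :=
            (IH (ℓ x) (by omega)).2.1 x le_rfl u i hux hxup huup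
          refine h1.tail ⟨⟨s i * t * s i, ?_, ?_⟩, ?_⟩
          · have := htref.conj (s i)
            rwa [cs.inv_simple] at this
          · simp [mul_assoc, cs.simple_mul_simple_cancel_left]
          · have e1 : ℓ (x * s i) = ℓ x + 1 := by
              rcases cs.length_mul_simple x i with h | h <;> omega
            have e2 : ℓ (x * t * s i) = ℓ (x * t) + 1 := by
              rcases cs.length_mul_simple (x * t) i with h | h <;> omega
            omega
        · have hxd : ℓ (x * s i) < ℓ x :=
            lt_of_le_of_ne hxdown (cs.length_mul_simple_ne x i)
          have h1 : br cs (u * s i) x :=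
            (IH (ℓ x) (by omega)).2.2 x le_rfl u i hux huup hxd
          exact (h1.tail ⟨⟨t, htref, rfl⟩, hlt⟩).tail
            ⟨⟨s i, cs.isReflection_simple i, rfl⟩, hvup⟩
    · -- lifting, descent case
      intro x hx u i hbr huup hxd
      have hx1 : 1 ≤ ℓ x := by omega
      obtain ⟨α, hαred, hα⟩ := cs.exists_reduced_word' (x * s i)
      have hαlen : α.length = ℓ (x * s i) := by
        have h' : ℓ (π α) = α.length := hαred
        rw [← hα] at h'
        omega
      have hxlen : ℓ (x * s i) + 1 = ℓ x := by
        rcases cs.length_mul_simple x i with h | h <;> omega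
      have hαlen2 : ℓ (π α) = α.length := hαred
      have hxword : π (α ++ [i]) = x := by
        rw [cs.wordProd_append, cs.wordProd_singleton, ← hα,
          cs.simple_mul_simple_cancel_right]
      have hredword : cs.IsReduced (α ++ [i]) := by
        show ℓ (π (α ++ [i])) = (α ++ [i]).length
        rw [hxword, List.length_append, List.length_singleton]
        omega
      obtain ⟨γ, hγsub, hγred, hγprod⟩ := subword_of_br cs hbr (α ++ [i]) hredword hxword
      obtain ⟨β, γ₂, rfl, hβ, hγ₂⟩ := List.sublist_append_iff.mp hγsub
      rcases sublist_singleton hγ₂ with rfl | rfl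
      · rw [List.append_nil] at hγred hγprod
        have hbrβ : br cs u (π α) := by
          rw [← hγprod]
          exact (IH (n - 1) (by omega)).1 α hαred (by omega) β hβ hγred
        have hP := (IH (n - 1) (by omega)).2.1 (π α) (by omega) u i
          (by exact hbrβ) ?_ huup
        · rw [← hα] at hP
          rwa [cs.simple_mul_simple_cancel_right] at hP
        · rw [← hα, cs.simple_mul_simple_cancel_right]
          omega
      · exfalso
        obtain ⟨hβred, hβup⟩ := reduced_concat_facts cs hγred
        have hβu : π β * s i = u := by
          rw [← hγprod, cs.wordProd_append, cs.wordProd_singleton]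
        have husi : u * s i = π β := by
          rw [← hβu, cs.simple_mul_simple_cancel_right]
        rw [← hβu, cs.simple_mul_simple_cancel_right] at huup
        omega

end
end BruhatSubwordAux

/-- Let `(W,S)` be a Coxeter system and `y, w ∈ W`.  Then some reduced expression
of `w` admits a subword which is a reduced expression for `y` if and only if every reduced
expression of `w` admits a subword which is a reduced expression for `y`. -/
theorem bruhat_subword_some_iff_all {B : Type*} {W : Type*} [Group W]
    {M : CoxeterMatrix B} (cs : CoxeterSystem M W) (y w : W) :
    (∃ ω : List B, cs.IsReduced ω ∧ cs.wordProd ω = w ∧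
      ∃ ω' : List B, ω'.Sublist ω ∧ cs.IsReduced ω' ∧ cs.wordProd ω' = y) ↔
    (∀ ω : List B, cs.IsReduced ω → cs.wordProd ω = w →
      ∃ ω' : List B, ω'.Sublist ω ∧ cs.IsReduced ω' ∧ cs.wordProd ω' = y) := by
  constructor
  · rintro ⟨ω₀, h₀red, h₀prod, ω', hsub, hred', hprod'⟩ ω hred hprod
    have hbr : BruhatSubwordAux.br cs y w := by
      have h := (BruhatSubwordAux.key cs ω₀.length).1 ω₀ h₀red le_rfl ω' hsub hred'
      rwa [hprod', h₀prod] at h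
    exact BruhatSubwordAux.subword_of_br cs hbr ω hred hprod
  · intro h
    obtain ⟨ω₀, hred, hprod⟩ := cs.exists_reduced_word' w
    exact ⟨ω₀, hred, hprod.symm, h ω₀ hred hprod.symm⟩
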